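/- Let p be a prime and f ≥ 1 an integer. Let C be an algebraically closed field equipped with a nonarchimedean additive valuation v : C → ℝ ∪ {+∞} (v(xy) = v(x) + v(y), v(x+y) ≥ min(v(x), v(y)), v(x) = +∞ iff x = 0) normalized by v(p) = 1, and let O_C = {x ∈ C : v(x) ≥ 0}. Let a ∈ O_C with v(a) < 1 − 1/p^f, and let x ∈ O_C satisfy v(x^{p^f} − a·x) ≥ 1. Then there exists a unique y ∈ O_C such that y^{p^f} = a·y and v(x − y) ≥ 1 − v(a). -/

import Mathlib

open Polynomial

section Aux

variable {C : Type*} [Field C]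

/-- v 1 = 0 -/
lemma NA_v_one (v : C → WithTop ℝ)
    (hv_mul : ∀ x y : C, v (x * y) = v x + v y)
    (hv_top : ∀ x : C, v x = ⊤ ↔ x = 0) : v 1 = 0 := by
  have h := hv_mul 1 1
  rw [one_mul] at h
  have h1 : v 1 ≠ ⊤ := fun hh => one_ne_zero ((hv_top 1).mp hh)
  obtain ⟨r, hr⟩ := WithTop.ne_top_iff_exists.mp h1
  rw [← hr] at h ⊢
  rw [← WithTop.coe_add, WithTop.coe_eq_coe] at h
  have : r = 0 := by linarith
  simp [this]

lemma NA_v_neg (v : C → WithTop ℝ)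
    (hv_mul : ∀ x y : C, v (x * y) = v x + v y)
    (hv_top : ∀ x : C, v x = ⊤ ↔ x = 0) (x : C) : v (-x) = v x := by
  have hm1 : v (-1 : C) = 0 := by
    have h := hv_mul (-1 : C) (-1)
    rw [neg_one_mul, neg_neg, NA_v_one v hv_mul hv_top] at h
    have h1 : v (-1 : C) ≠ ⊤ := fun hh => by simpa using (hv_top (-1)).mp hh
    obtain ⟨r, hr⟩ := WithTop.ne_top_iff_exists.mp h1
    rw [← hr] at h ⊢
    rw [← WithTop.coe_add] at h
    have : (0 : WithTop ℝ) = ((0 : ℝ) : WithTop ℝ) := rfl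
    rw [this, WithTop.coe_eq_coe] at h ⊢
    linarith
  have := hv_mul (-1 : C) x
  rw [neg_one_mul, hm1, zero_add] at this
  exact this

lemma NA_v_sub_ge (v : C → WithTop ℝ)
    (hv_mul : ∀ x y : C, v (x * y) = v x + v y)
    (hv_add : ∀ x y : C, min (v x) (v y) ≤ v (x + y))
    (hv_top : ∀ x : C, v x = ⊤ ↔ x = 0) (x y : C) :
    min (v x) (v y) ≤ v (x - y) := by
  have := hv_add x (-y)
  rwa [NA_v_neg v hv_mul hv_top y, ← sub_eq_add_neg] at this

/-- ultrametric equality when valuations differ -/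
lemma NA_v_add_eq (v : C → WithTop ℝ)
    (hv_mul : ∀ x y : C, v (x * y) = v x + v y)
    (hv_add : ∀ x y : C, min (v x) (v y) ≤ v (x + y))
    (hv_top : ∀ x : C, v x = ⊤ ↔ x = 0) (x y : C) (h : v x < v y) :
    v (x + y) = v x := by
  refine le_antisymm ?_ ?_
  · by_contra h'
    push_neg at h'
    have hxx : min (v (x + y)) (v (-y)) ≤ v ((x + y) + (-y)) := hv_add _ _
    rw [add_neg_cancel_right, NA_v_neg v hv_mul hv_top] at hxx
    exact absurd hxx (not_le.mpr (lt_min h' h))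
  · have := hv_add x y
    rwa [min_eq_left h.le] at this

lemma NA_pow_coe (v : C → WithTop ℝ)
    (hv_mul : ∀ x y : C, v (x * y) = v x + v y)
    (hv_top : ∀ x : C, v x = ⊤ ↔ x = 0) (x : C) (r : ℝ) (hx : v x = (r : ℝ))
    (n : ℕ) : v (x ^ n) = ((n * r : ℝ) : WithTop ℝ) := by
  induction n with
  | zero => simp [NA_v_one v hv_mul hv_top]
  | succ n ih =>
    rw [pow_succ, hv_mul, ih, hx, ← WithTop.coe_add]
    congr 1
    push_cast
    ring

lemma NA_exists_coe (v : C → WithTop ℝ)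
    (hv_top : ∀ x : C, v x = ⊤ ↔ x = 0) (x : C) (h : x ≠ 0) :
    ∃ r : ℝ, v x = (r : ℝ) := by
  have : v x ≠ ⊤ := fun hh => h ((hv_top x).mp hh)
  obtain ⟨r, hr⟩ := WithTop.ne_top_iff_exists.mp this
  exact ⟨r, hr.symm⟩

/-- Solve `n * (v x) = t`. -/
lemma NA_pow_eq_coe_val (v : C → WithTop ℝ)
    (hv_mul : ∀ x y : C, v (x * y) = v x + v y)
    (hv_top : ∀ x : C, v x = ⊤ ↔ x = 0) (x : C) (n : ℕ) (hn : 1 ≤ n)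
    (t : ℝ) (h : v (x ^ n) = (t : ℝ)) : v x = ((t / n : ℝ) : WithTop ℝ) := by
  have hx0 : x ≠ 0 := by
    rintro rfl
    rw [zero_pow (by omega : n ≠ 0)] at h
    rw [(hv_top 0).mpr rfl] at h
    exact (WithTop.top_ne_coe h).elim
  obtain ⟨r, hr⟩ := NA_exists_coe v hv_top x hx0
  have := NA_pow_coe v hv_mul hv_top x r hr n
  rw [h] at this
  have hnr : (n : ℝ) * r = t := (WithTop.coe_eq_coe.mp this.symm)
  have hn0 : (n : ℝ) ≠ 0 := by positivity
  rw [hr]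
  congr 1
  field_simp [← hnr]
  linarith

lemma NA_v_inv (v : C → WithTop ℝ)
    (hv_mul : ∀ x y : C, v (x * y) = v x + v y)
    (hv_top : ∀ x : C, v x = ⊤ ↔ x = 0) (x : C) (r : ℝ) (hx : v x = (r : ℝ)) :
    v x⁻¹ = ((-r : ℝ) : WithTop ℝ) := by
  have hx0 : x ≠ 0 := by
    intro h
    rw [h, (hv_top 0).mpr rfl] at hx
    exact (WithTop.top_ne_coe hx).elim
  have h1 := hv_mul x x⁻¹
  rw [mul_inv_cancel₀ hx0, NA_v_one v hv_mul hv_top, hx] at h1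
  obtain ⟨s, hs⟩ := NA_exists_coe v hv_top x⁻¹ (inv_ne_zero hx0)
  rw [hs] at h1 ⊢
  rw [← WithTop.coe_add] at h1
  have : (0 : WithTop ℝ) = ((0 : ℝ) : WithTop ℝ) := rfl
  rw [this, eq_comm, WithTop.coe_eq_coe] at h1
  rw [WithTop.coe_eq_coe]
  linarith

lemma NA_prod (v : C → WithTop ℝ)
    (hv_mul : ∀ x y : C, v (x * y) = v x + v y)
    (hv_top : ∀ x : C, v x = ⊤ ↔ x = 0) (s : Multiset C) :
    v s.prod = (s.map v).sum := by
  induction s using Multiset.induction_on with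
  | empty => simp [NA_v_one v hv_mul hv_top]
  | cons a s ih => rw [Multiset.prod_cons, hv_mul, ih, Multiset.map_cons, Multiset.sum_cons]

lemma NA_nat_nonneg (v : C → WithTop ℝ)
    (hv_mul : ∀ x y : C, v (x * y) = v x + v y)
    (hv_add : ∀ x y : C, min (v x) (v y) ≤ v (x + y))
    (hv_top : ∀ x : C, v x = ⊤ ↔ x = 0) (n : ℕ) : 0 ≤ v (n : C) := by
  induction n with
  | zero => simp [(hv_top 0).mpr rfl]
  | succ n ih =>
    push_cast
    refine le_trans ?_ (hv_add (n : C) 1)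
    rw [NA_v_one v hv_mul hv_top]
    exact le_min ih le_rfl

lemma NA_int_nonneg (v : C → WithTop ℝ)
    (hv_mul : ∀ x y : C, v (x * y) = v x + v y)
    (hv_add : ∀ x y : C, min (v x) (v y) ≤ v (x + y))
    (hv_top : ∀ x : C, v x = ⊤ ↔ x = 0) (n : ℤ) : 0 ≤ v (n : C) := by
  obtain ⟨m, rfl | rfl⟩ := n.eq_nat_or_neg
  · push_cast
    exact NA_nat_nonneg v hv_mul hv_add hv_top m
  · push_cast
    rw [NA_v_neg v hv_mul hv_top]
    exact NA_nat_nonneg v hv_mul hv_add hv_top m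

/-- naturals coprime to p have valuation 0 (in particular nonzero in C) -/
lemma NA_coprime (p : ℕ) (v : C → WithTop ℝ)
    (hv_mul : ∀ x y : C, v (x * y) = v x + v y)
    (hv_add : ∀ x y : C, min (v x) (v y) ≤ v (x + y))
    (hv_top : ∀ x : C, v x = ⊤ ↔ x = 0)
    (hv_p : v (p : C) = ((1 : ℝ) : WithTop ℝ))
    (m : ℕ) (hm : Nat.Coprime m p) : v ((m : ℕ) : C) = 0 := by
  have hbez := Nat.gcd_eq_gcd_ab m p
  rw [hm] at hbez
  -- (1 : ℤ) = m * gcdA + p * gcdB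
  have hC : (1 : C) = (m : C) * ((Nat.gcdA m p : ℤ) : C) + (p : C) * ((Nat.gcdB m p : ℤ) : C) := by
    have := congrArg (fun z : ℤ => (z : C)) hbez
    push_cast at this
    push_cast
    linear_combination this
  have h0 : min (v ((m : C) * ((Nat.gcdA m p : ℤ) : C)))
      (v ((p : C) * ((Nat.gcdB m p : ℤ) : C))) ≤ 0 := by
    have := hv_add ((m : C) * ((Nat.gcdA m p : ℤ) : C)) ((p : C) * ((Nat.gcdB m p : ℤ) : C))
    rw [← hC, NA_v_one v hv_mul hv_top] at this
    exact this
  have hpB : (0 : WithTop ℝ) < v ((p : C) * ((Nat.gcdB m p : ℤ) : C)) := by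
    rw [hv_mul, hv_p]
    have h1 : (0 : WithTop ℝ) < ((1 : ℝ) : WithTop ℝ) := by
      exact_mod_cast (by norm_num : (0 : ℝ) < 1)
    calc (0 : WithTop ℝ) < ((1 : ℝ) : WithTop ℝ) := h1
      _ = ((1 : ℝ) : WithTop ℝ) + 0 := by rw [add_zero]
      _ ≤ ((1 : ℝ) : WithTop ℝ) + v ((Nat.gcdB m p : ℤ) : C) := by
          exact add_le_add le_rfl (NA_int_nonneg v hv_mul hv_add hv_top _)
  have hmA : v ((m : C) * ((Nat.gcdA m p : ℤ) : C)) ≤ 0 := by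
    by_contra h'
    push_neg at h'
    exact absurd h0 (not_le.mpr (lt_min h' hpB))
  rw [hv_mul] at hmA
  have hm0 : 0 ≤ v ((m : ℕ) : C) := NA_nat_nonneg v hv_mul hv_add hv_top m
  have : v ((m : ℕ) : C) ≤ v ((m : ℕ) : C) + v ((Nat.gcdA m p : ℤ) : C) :=
    le_add_of_nonneg_right (NA_int_nonneg v hv_mul hv_add hv_top _)
  exact le_antisymm (this.trans hmA) hm0

/-- a Q-th root of unity different from 1 has `v (ζ - 1) = 0` -/
lemma NA_root_unity [IsAlgClosed C] (v : C → WithTop ℝ)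
    (hv_mul : ∀ x y : C, v (x * y) = v x + v y)
    (hv_add : ∀ x y : C, min (v x) (v y) ≤ v (x + y))
    (hv_top : ∀ x : C, v x = ⊤ ↔ x = 0)
    (Q : ℕ) (hQ : 1 ≤ Q) (hQ0 : ((Q : ℕ) : C) ≠ 0)
    (hQv : v ((Q : ℕ) : C) = 0)
    (ζ : C) (hζQ : ζ ^ Q = 1) (hζ1 : ζ ≠ 1) : v (ζ - 1) = 0 := by
  classical
  set P : C[X] := X ^ Q - Polynomial.C (1 : C) with hP
  have hmonic : P.Monic := monic_X_pow_sub_C (1 : C) (by omega)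
  have hsep : P.Separable := separable_X_pow_sub_C (1 : C) hQ0 one_ne_zero
  have hnodup : P.roots.Nodup := nodup_roots hsep
  have hne : P ≠ 0 := hmonic.ne_zero
  have hprod : P = (P.roots.map fun r => X - Polynomial.C r).prod :=
    (IsAlgClosed.splits P).eq_prod_roots_of_monic hmonic
  have h1mem : (1 : C) ∈ P.roots := by
    rw [mem_roots hne]
    simp [hP, IsRoot]
  have hζmem : ζ ∈ P.roots := by
    rw [mem_roots hne]
    simp [hP, IsRoot, hζQ]
  have hcons : P.roots = (1 : C) ::ₘ P.roots.erase 1 := (Multiset.cons_erase h1mem).symm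
  -- geometric sum
  set g : C[X] := ∑ i ∈ Finset.range Q, X ^ i with hg
  have hgm : g * (X - 1) = P := by
    rw [hg, geom_sum_mul]
    simp [hP]
  have hprod2 : P = (X - Polynomial.C (1 : C)) * ((P.roots.erase 1).map
      fun r => X - Polynomial.C r).prod := by
    conv_lhs => rw [hprod, hcons]
    rw [Multiset.map_cons, Multiset.prod_cons]
  have hXne : (X - Polynomial.C (1 : C)) ≠ 0 := X_sub_C_ne_zero 1
  have hgeq : g = ((P.roots.erase 1).map fun r => X - Polynomial.C r).prod := by
    apply mul_left_cancel₀ hXne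
    rw [← hprod2, ← hgm, mul_comm]
    congr 1
    try simp
  -- evaluate at 1
  have heval : ((Q : ℕ) : C) = ((P.roots.erase 1).map fun r => 1 - r).prod := by
    have h1 : g.eval 1 = ((Q : ℕ) : C) := by
      rw [hg]
      simp [eval_finset_sum]
    have h2 : g.eval 1 = ((P.roots.erase 1).map fun r => 1 - r).prod := by
      rw [hgeq, eval_multiset_prod, Multiset.map_map]
      congr 1
      apply Multiset.map_congr rfl
      intro r _
      simp
    rw [← h1, h2]
  -- valuations
  have hroot_val : ∀ r ∈ P.roots, v r = 0 := by
    intro r hr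
    rw [mem_roots hne] at hr
    have hrQ : r ^ Q = 1 := by
      have := hr
      simp only [hP, IsRoot, eval_sub, eval_pow, eval_X, eval_C, sub_eq_zero] at this
      exact this
    have : v (r ^ Q) = ((0 : ℝ) : WithTop ℝ) := by
      rw [hrQ, NA_v_one v hv_mul hv_top]; rfl
    have := NA_pow_eq_coe_val v hv_mul hv_top r Q hQ 0 this
    simpa using this
  have hnonneg : ∀ r ∈ P.roots.erase 1, 0 ≤ v (1 - r) := by
    intro r hr
    have hr' : r ∈ P.roots := Multiset.mem_of_mem_erase hr
    have := NA_v_sub_ge v hv_mul hv_add hv_top 1 r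
    rw [NA_v_one v hv_mul hv_top, hroot_val r hr'] at this
    simpa using this
  have hsum : (((P.roots.erase 1).map fun r => 1 - r).map v).sum = 0 := by
    rw [← NA_prod v hv_mul hv_top, ← heval, hQv]
  have hζerase : ζ ∈ P.roots.erase 1 := (Multiset.mem_erase_of_ne hζ1).mpr hζmem
  have hmem2 : v (1 - ζ) ∈ ((P.roots.erase 1).map fun r => 1 - r).map v := by
    rw [Multiset.map_map]
    exact Multiset.mem_map_of_mem _ hζerase
  have hle : v (1 - ζ) ≤ (((P.roots.erase 1).map fun r => 1 - r).map v).sum := by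
    apply Multiset.single_le_sum _ _ hmem2
    intro z hz
    rw [Multiset.map_map] at hz
    obtain ⟨r, hr, rfl⟩ := Multiset.mem_map.mp hz
    exact hnonneg r hr
  rw [hsum] at hle
  have hge : 0 ≤ v (1 - ζ) := hnonneg ζ hζerase
  have h0 : v (1 - ζ) = 0 := le_antisymm hle hge
  rw [← NA_v_neg v hv_mul hv_top, neg_sub] at h0
  exact h0

/-- Hensel-type: if `v (c - 1) > 0` then there is a Q-th root `u` of `c`
with `v (u - 1) ≥ v (c - 1)`. -/
lemma NA_near_one [IsAlgClosed C] (v : C → WithTop ℝ)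
    (hv_mul : ∀ x y : C, v (x * y) = v x + v y)
    (hv_add : ∀ x y : C, min (v x) (v y) ≤ v (x + y))
    (hv_top : ∀ x : C, v x = ⊤ ↔ x = 0)
    (Q : ℕ) (hQ : 1 ≤ Q) (hQ0 : ((Q : ℕ) : C) ≠ 0)
    (hQv : v ((Q : ℕ) : C) = 0)
    (c : C) (hc0 : c ≠ 0) (hpos : 0 < v (c - 1)) :
    ∃ u : C, u ^ Q = c ∧ v (c - 1) ≤ v (u - 1) := by
  classical
  have hvc : v c = 0 := by
    have h1 : v (1 : C) < v (c - 1) := by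
      rw [NA_v_one v hv_mul hv_top]; exact hpos
    have := NA_v_add_eq v hv_mul hv_add hv_top 1 (c - 1) h1
    rw [add_sub_cancel] at this
    rw [this, NA_v_one v hv_mul hv_top]
  set P : C[X] := X ^ Q - Polynomial.C c with hP
  have hmonic : P.Monic := monic_X_pow_sub_C c (by omega)
  have hsep : P.Separable := separable_X_pow_sub_C c hQ0 hc0
  have hnodup : P.roots.Nodup := nodup_roots hsep
  have hne : P ≠ 0 := hmonic.ne_zero
  have hprod : P = (P.roots.map fun r => X - Polynomial.C r).prod :=
    (IsAlgClosed.splits P).eq_prod_roots_of_monic hmonic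
  have hrootQ : ∀ r ∈ P.roots, r ^ Q = c := by
    intro r hr
    rw [mem_roots hne] at hr
    have := hr
    simp only [hP, IsRoot, eval_sub, eval_pow, eval_X, eval_C, sub_eq_zero] at this
    exact this
  have hroot_ne : ∀ r ∈ P.roots, r ≠ 0 := by
    intro r hr h0
    exact hc0 (by rw [← hrootQ r hr, h0, zero_pow (by omega : Q ≠ 0)])
  have hroot_val : ∀ r ∈ P.roots, v r = 0 := by
    intro r hr
    have : v (r ^ Q) = ((0 : ℝ) : WithTop ℝ) := by
      rw [hrootQ r hr, hvc]; rfl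
    have := NA_pow_eq_coe_val v hv_mul hv_top r Q hQ 0 this
    simpa using this
  have hnonneg : ∀ r ∈ P.roots, 0 ≤ v (1 - r) := by
    intro r hr
    have := NA_v_sub_ge v hv_mul hv_add hv_top 1 r
    rw [NA_v_one v hv_mul hv_top, hroot_val r hr] at this
    simpa using this
  -- evaluate product at 1
  have heval : 1 - c = ((P.roots).map fun r => 1 - r).prod := by
    have h1 : P.eval 1 = 1 - c := by simp [hP]
    have h2 : P.eval 1 = ((P.roots).map fun r => 1 - r).prod := by
      conv_lhs => rw [hprod]
      rw [eval_multiset_prod, Multiset.map_map]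
      congr 1
      apply Multiset.map_congr rfl
      intro r _
      simp
    rw [← h1, h2]
  have hsum : v (1 - c) = (((P.roots).map fun r => 1 - r).map v).sum := by
    rw [heval, NA_prod v hv_mul hv_top]
  have hvc1 : v (1 - c) = v (c - 1) := by
    rw [← NA_v_neg v hv_mul hv_top (1 - c), neg_sub]
  -- some root r0 with 0 < v (1 - r0)
  have hex : ∃ r0 ∈ P.roots, 0 < v (1 - r0) := by
    by_contra h'
    push_neg at h'
    have hall : ∀ z ∈ ((P.roots).map fun r => 1 - r).map v, z = 0 := by
      intro z hz
      rw [Multiset.map_map] at hz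
      obtain ⟨r, hr, rfl⟩ := Multiset.mem_map.mp hz
      exact le_antisymm (h' r hr) (hnonneg r hr)
    have : (((P.roots).map fun r => 1 - r).map v).sum = 0 := Multiset.sum_eq_zero hall
    rw [← hsum, hvc1] at this
    exact absurd this (ne_of_gt hpos)
  obtain ⟨r0, hr0mem, hr0pos⟩ := hex
  -- all other roots have v (1 - r) = 0
  have hothers : ∀ r ∈ P.roots, r ≠ r0 → v (1 - r) = 0 := by
    intro r hr hrne
    refine le_antisymm ?_ (hnonneg r hr)
    by_contra h'
    push_neg at h'
    -- then v (r0 - r) > 0, but v (r0 - r) = 0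
    have hgt : 0 < v (r0 - r) := by
      have : r0 - r = (1 - r) - (1 - r0) := by ring
      rw [this]
      refine lt_of_lt_of_le (lt_min h' hr0pos) (NA_v_sub_ge v hv_mul hv_add hv_top _ _)
    have hr00 : r0 ≠ 0 := hroot_ne r0 hr0mem
    set ζ : C := r * r0⁻¹ with hζ
    have hζQ : ζ ^ Q = 1 := by
      rw [hζ, mul_pow, inv_pow, hrootQ r hr, hrootQ r0 hr0mem,
        mul_inv_cancel₀ hc0]
    have hζ1 : ζ ≠ 1 := by
      intro h
      apply hrne
      rw [hζ, mul_inv_eq_one₀ hr00] at h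
      exact h
    have hζv : v (ζ - 1) = 0 :=
      NA_root_unity v hv_mul hv_add hv_top Q hQ hQ0 hQv ζ hζQ hζ1
    have hfac : r - r0 = r0 * (ζ - 1) := by
      rw [hζ]
      field_simp
    have : v (r - r0) = 0 := by
      rw [hfac, hv_mul, hroot_val r0 hr0mem, hζv, add_zero]
    rw [← NA_v_neg v hv_mul hv_top (r - r0), neg_sub] at this
    rw [this] at hgt
    exact lt_irrefl _ hgt
  -- sum collapses to v (1 - r0)
  have hcons : P.roots = r0 ::ₘ P.roots.erase r0 := (Multiset.cons_erase hr0mem).symm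
  have hrest : ((P.roots.erase r0).map fun r => v (1 - r)).sum = 0 := by
    apply Multiset.sum_eq_zero
    intro z hz
    obtain ⟨r, hr, rfl⟩ := Multiset.mem_map.mp hz
    have hrne : r ≠ r0 := (hnodup.mem_erase_iff.mp hr).1
    exact hothers r (Multiset.mem_of_mem_erase hr) hrne
  have hsum2 : v (c - 1) = v (1 - r0) := by
    rw [← hvc1, hsum, Multiset.map_map]
    conv_lhs => rw [hcons]
    rw [Multiset.map_cons, Multiset.sum_cons]
    simp only [Function.comp_apply]
    rw [hrest, add_zero]
  refine ⟨r0, hrootQ r0 hr0mem, ?_⟩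
  rw [hsum2, ← NA_v_neg v hv_mul hv_top (1 - r0), neg_sub]

/-- helper for WithTop coe arithmetic: from `c ≤ z + t` deduce `c - t ≤ z`. -/
lemma NA_sub_le (z : WithTop ℝ) (t c : ℝ) (h : ((c : ℝ) : WithTop ℝ) ≤ z + ((t : ℝ) : WithTop ℝ)) :
    ((c - t : ℝ) : WithTop ℝ) ≤ z := by
  induction z using WithTop.recTopCoe with
  | top => exact le_top
  | coe w =>
    rw [← WithTop.coe_add, WithTop.coe_le_coe] at h
    rw [WithTop.coe_le_coe]
    linarith

end Aux

/-- Newton approximation for `X^{p^f} = aX` over an algebraically closed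
nonarchimedean valued field.  The valuation is additive, with values in
`ℝ ∪ {+∞}` (modeled as `WithTop ℝ`), normalized by `v p = 1`; `O_C` is the set of
elements of nonnegative valuation.  If `a ∈ O_C` with `v a < 1 − 1/p^f` and
`x ∈ O_C` satisfies `v (x^{p^f} − a·x) ≥ 1`, then there is a unique `y ∈ O_C` with
`y^{p^f} = a·y` and `v (x − y) ≥ 1 − v a` (stated as `v (x − y) + v a ≥ 1`, which
is equivalent since `v a` is a finite real number). -/
theorem newton_approximation_unique_root
    (p f : ℕ) (hp : p.Prime) (hf : 1 ≤ f)
    (C : Type*) [Field C] [IsAlgClosed C]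
    (v : C → WithTop ℝ)
    (hv_mul : ∀ x y : C, v (x * y) = v x + v y)
    (hv_add : ∀ x y : C, min (v x) (v y) ≤ v (x + y))
    (hv_top : ∀ x : C, v x = ⊤ ↔ x = 0)
    (hv_p : v (p : C) = ((1 : ℝ) : WithTop ℝ))
    (a x : C)
    (ha0 : 0 ≤ v a) (ha : v a < (((1 - 1 / (p : ℝ) ^ f) : ℝ) : WithTop ℝ))
    (hx0 : 0 ≤ v x)
    (hx : ((1 : ℝ) : WithTop ℝ) ≤ v (x ^ p ^ f - a * x)) :
    ∃! y : C, 0 ≤ v y ∧ y ^ p ^ f = a * y ∧ ((1 : ℝ) : WithTop ℝ) ≤ v (x - y) + v a := by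
  classical
  have hp2 : 2 ≤ p := hp.two_le
  have hq2 : 2 ≤ p ^ f := by
    calc 2 ≤ p := hp2
    _ = p ^ 1 := (pow_one p).symm
    _ ≤ p ^ f := Nat.pow_le_pow_right (by omega) hf
  set Q : ℕ := p ^ f - 1 with hQdef
  have h12 : 1 < p ^ f := lt_of_lt_of_le one_lt_two hq2
  have hQ1 : 1 ≤ Q := Nat.le_sub_one_of_lt h12
  have hQq : Q + 1 = p ^ f := Nat.sub_add_cancel (le_of_lt h12)
  -- Q coprime to p
  have hcop : Nat.Coprime Q p := by
    rw [Nat.coprime_comm]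
    rw [hp.coprime_iff_not_dvd]
    intro hdvd
    have h1 : p ∣ p ^ f := dvd_pow_self p (by omega)
    have h2 : p ∣ p ^ f - Q := Nat.dvd_sub h1 hdvd
    have h3 : p ^ f - Q = 1 := by rw [← hQq]; omega
    rw [h3] at h2
    have := Nat.le_of_dvd one_pos h2
    omega
  have hQv : v ((Q : ℕ) : C) = 0 := NA_coprime p v hv_mul hv_add hv_top hv_p Q hcop
  have hQ0 : ((Q : ℕ) : C) ≠ 0 := by
    intro h
    rw [h, (hv_top 0).mpr rfl] at hQv
    exact (WithTop.top_ne_coe (hQv.trans rfl)).elim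
  -- a ≠ 0
  have ha_ne : a ≠ 0 := by
    intro h
    rw [h, (hv_top 0).mpr rfl] at ha
    exact absurd ha not_top_lt
  obtain ⟨t, ht⟩ := NA_exists_coe v hv_top a ha_ne
  have ht0 : 0 ≤ t := by
    rw [ht] at ha0
    exact_mod_cast ha0
  have htlt : t < 1 - 1 / (p : ℝ) ^ f := by
    rw [ht, WithTop.coe_lt_coe] at ha
    exact ha
  set N : ℝ := (Q : ℝ) with hNdef
  have hN1 : (1 : ℝ) ≤ N := by rw [hNdef]; exact_mod_cast hQ1
  have hNq : N + 1 = (p : ℝ) ^ f := by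
    have h := congrArg (fun n : ℕ => (n : ℝ)) hQq
    push_cast at h
    rw [hNdef]
    linarith
  have hN0 : (0 : ℝ) < N := by linarith
  -- key real inequality: t / N < 1 - t
  have hkey : t / N < 1 - t := by
    rw [div_lt_iff₀ hN0]
    rw [← hNq] at htlt
    have hN1pos : (0 : ℝ) < N + 1 := by linarith
    have := mul_lt_mul_of_pos_right htlt hN1pos
    rw [sub_mul, one_mul, div_mul_cancel₀ _ (ne_of_gt hN1pos)] at this
    nlinarith
  -- case split
  rcases le_or_gt ((1 : ℝ) : WithTop ℝ) (v x + v a) with h1le | hlt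
  · -- y = 0
    refine ⟨0, ⟨?_, ?_, ?_⟩, ?_⟩
    · rw [(hv_top 0).mpr rfl]; exact le_top
    · rw [zero_pow (by omega : p ^ f ≠ 0), mul_zero]
    · rw [sub_zero]; exact h1le
    · rintro y ⟨hy0, hyq, hyv⟩
      by_contra hyne
      -- y ≠ 0, so y^Q = a
      have hyQ : y ^ Q = a := by
        have h : y ^ Q * y = a * y := by
          rw [← pow_succ, hQq]; exact hyq
        exact mul_right_cancel₀ hyne h
      have hvyQ : v (y ^ Q) = ((t : ℝ) : WithTop ℝ) := by rw [hyQ, ht]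
      have hvy : v y = ((t / N : ℝ) : WithTop ℝ) := by
        have := NA_pow_eq_coe_val v hv_mul hv_top y Q hQ1 t hvyQ
        rwa [hNdef]
      -- v (x - y) ≥ 1 - t  and  v x ≥ 1 - t
      have hxy : ((1 - t : ℝ) : WithTop ℝ) ≤ v (x - y) := by
        apply NA_sub_le
        rw [← ht]; exact hyv
      have hvx : ((1 - t : ℝ) : WithTop ℝ) ≤ v x := by
        apply NA_sub_le
        rw [← ht]; exact h1le
      -- v y ≥ min ≥ 1 - t, contradiction with v y = t/N < 1 - t
      have : ((1 - t : ℝ) : WithTop ℝ) ≤ v y := by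
        have h : min (v x) (v (x - y)) ≤ v (x - (x - y)) :=
          NA_v_sub_ge v hv_mul hv_add hv_top x (x - y)
        rw [sub_sub_cancel] at h
        exact le_trans (le_min hvx hxy) h
      rw [hvy, WithTop.coe_le_coe] at this
      linarith
  · -- main case: v x + v a < 1
    have hx_ne : x ≠ 0 := by
      intro h
      rw [h, (hv_top 0).mpr rfl, ht] at hlt
      simp at hlt
    obtain ⟨r, hr⟩ := NA_exists_coe v hv_top x hx_ne
    have hrt : r + t < 1 := by
      rw [hr, ht, ← WithTop.coe_add, WithTop.coe_lt_coe] at hlt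
      exact hlt
    have hr0 : 0 ≤ r := by
      rw [hr] at hx0
      exact_mod_cast hx0
    -- factor
    have hfac : x ^ p ^ f - a * x = x * (x ^ Q - a) := by
      rw [← hQq, pow_succ]; ring
    have hw : ((1 - r : ℝ) : WithTop ℝ) ≤ v (x ^ Q - a) := by
      apply NA_sub_le
      rw [← hr]
      calc ((1 : ℝ) : WithTop ℝ) ≤ v (x ^ p ^ f - a * x) := hx
        _ = v x + v (x ^ Q - a) := by rw [hfac, hv_mul]
        _ = v (x ^ Q - a) + v x := by rw [add_comm]
    have hvxQ : v (x ^ Q) = ((N * r : ℝ) : WithTop ℝ) := by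
      rw [NA_pow_coe v hv_mul hv_top x r hr Q, hNdef]
    have hva_neg : v (-a) = ((t : ℝ) : WithTop ℝ) := by
      rw [NA_v_neg v hv_mul hv_top, ht]
    -- show N * r = t
    have hNr : N * r = t := by
      rcases lt_trichotomy (N * r) t with hc | hc | hc
      · -- v (x^Q - a) = N r
        have heq : v (x ^ Q - a) = ((N * r : ℝ) : WithTop ℝ) := by
          have : v (x ^ Q) < v (-a) := by
            rw [hvxQ, hva_neg, WithTop.coe_lt_coe]; exact hc
          have h := NA_v_add_eq v hv_mul hv_add hv_top (x ^ Q) (-a) this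
          rw [← sub_eq_add_neg] at h
          rw [h, hvxQ]
        rw [heq, WithTop.coe_le_coe] at hw
        -- 1 - r ≤ N r, and N r < t < 1 - 1/(N+1)
        rw [← hNq] at htlt
        have h1 : 1 ≤ (N + 1) * r := by nlinarith
        nlinarith
      · exact hc
      · -- v (x^Q - a) = t
        have heq : v (x ^ Q - a) = ((t : ℝ) : WithTop ℝ) := by
          have : v (-a) < v (x ^ Q) := by
            rw [hvxQ, hva_neg, WithTop.coe_lt_coe]; exact hc
          have h := NA_v_add_eq v hv_mul hv_add hv_top (-a) (x ^ Q) this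
          rw [add_comm, ← sub_eq_add_neg] at h
          rw [h, hva_neg]
        rw [heq, WithTop.coe_le_coe] at hw
        linarith
    -- set c
    have hxQ_ne : x ^ Q ≠ 0 := pow_ne_zero Q hx_ne
    set c : C := x ^ Q * a⁻¹ with hc
    have hc0 : c ≠ 0 := mul_ne_zero hxQ_ne (inv_ne_zero ha_ne)
    have hainv : v a⁻¹ = ((-t : ℝ) : WithTop ℝ) := NA_v_inv v hv_mul hv_top a t ht
    have hc1 : c - 1 = (x ^ Q - a) * a⁻¹ := by
      field_simp [hc]
      rw [hc, sub_mul, mul_assoc, inv_mul_cancel₀ ha_ne, mul_one, one_mul]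
    have hvc1 : ((1 - r - t : ℝ) : WithTop ℝ) ≤ v (c - 1) := by
      rw [hc1, hv_mul, hainv]
      calc ((1 - r - t : ℝ) : WithTop ℝ) = ((1 - r : ℝ) : WithTop ℝ) + ((-t : ℝ) : WithTop ℝ) := by
            rw [← WithTop.coe_add]; congr 1 <;> try ring
        _ ≤ v (x ^ Q - a) + ((-t : ℝ) : WithTop ℝ) := add_le_add hw le_rfl
    have hpos : (0 : WithTop ℝ) < v (c - 1) := by
      refine lt_of_lt_of_le ?_ hvc1
      have : (0 : WithTop ℝ) = ((0 : ℝ) : WithTop ℝ) := rfl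
      rw [this, WithTop.coe_lt_coe]
      linarith
    obtain ⟨u, huQ, huv⟩ :=
      NA_near_one v hv_mul hv_add hv_top Q hQ1 hQ0 hQv c hc0 hpos
    have hu_ne : u ≠ 0 := by
      intro h
      rw [h, zero_pow (by omega : Q ≠ 0)] at huQ
      exact hc0 huQ.symm
    have hvc : v c = 0 := by
      rw [hc, hv_mul, hvxQ, hainv, ← WithTop.coe_add, hNr]
      simp
    have hvu : v u = ((0 : ℝ) : WithTop ℝ) := by
      have h : v (u ^ Q) = ((0 : ℝ) : WithTop ℝ) := by rw [huQ, hvc]; rfl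
      have := NA_pow_eq_coe_val v hv_mul hv_top u Q hQ1 0 h
      simpa using this
    have hvuinv : v u⁻¹ = ((0 : ℝ) : WithTop ℝ) := by
      have := NA_v_inv v hv_mul hv_top u 0 hvu
      simpa using this
    set y : C := x * u⁻¹ with hy
    have hy_ne : y ≠ 0 := mul_ne_zero hx_ne (inv_ne_zero hu_ne)
    have hvy : v y = ((r : ℝ) : WithTop ℝ) := by
      rw [hy, hv_mul, hr, hvuinv, ← WithTop.coe_add, add_zero]
    have hyQ : y ^ Q = a := by
      rw [hy, mul_pow, inv_pow, huQ, hc]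
      field_simp
    have hyq : y ^ p ^ f = a * y := by
      rw [← hQq, pow_succ, hyQ]
    -- v (x - y) ≥ 1 - t
    have hxy_fac : x - y = x * u⁻¹ * (u - 1) := by
      rw [hy]
      field_simp
    have huv1 : ((1 - r - t : ℝ) : WithTop ℝ) ≤ v (u - 1) := le_trans hvc1 huv
    have hvxy : ((1 - t : ℝ) : WithTop ℝ) ≤ v (x - y) := by
      rw [hxy_fac, hv_mul, hv_mul, hr, hvuinv, ← WithTop.coe_add, add_zero]
      calc ((1 - t : ℝ) : WithTop ℝ) = ((r : ℝ) : WithTop ℝ) + ((1 - r - t : ℝ) : WithTop ℝ) := by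
            rw [← WithTop.coe_add]; congr 1 <;> try ring
        _ ≤ ((r : ℝ) : WithTop ℝ) + v (u - 1) := add_le_add le_rfl huv1
    have hmain : ((1 : ℝ) : WithTop ℝ) ≤ v (x - y) + v a := by
      rw [ht]
      calc ((1 : ℝ) : WithTop ℝ) = ((1 - t : ℝ) : WithTop ℝ) + ((t : ℝ) : WithTop ℝ) := by
            rw [← WithTop.coe_add]; congr 1 <;> try ring
        _ ≤ v (x - y) + ((t : ℝ) : WithTop ℝ) := add_le_add hvxy le_rfl
    refine ⟨y, ⟨?_, hyq, hmain⟩, ?_⟩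
    · rw [hvy]
      exact_mod_cast hr0
    · -- uniqueness
      rintro y' ⟨hy'0, hy'q, hy'v⟩
      by_contra hne
      have hxy' : ((1 - t : ℝ) : WithTop ℝ) ≤ v (x - y') := by
        apply NA_sub_le
        rw [← ht]; exact hy'v
      have hyy' : ((1 - t : ℝ) : WithTop ℝ) ≤ v (y' - y) := by
        have h : min (v (x - y)) (v (x - y')) ≤ v ((x - y) - (x - y')) :=
          NA_v_sub_ge v hv_mul hv_add hv_top _ _
        have heq : (x - y) - (x - y') = y' - y := by ring
        rw [heq] at h
        exact le_trans (le_min hvxy hxy') h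
      -- but v (y' - y) = t/N or r < 1 - t
      have hrtN : r = t / N := by
        field_simp [← hNr]
        linarith
      rcases eq_or_ne y' 0 with rfl | hy'ne
      · -- v (0 - y) = v y = r = t/N < 1 - t
        have : v ((0 : C) - y) = ((r : ℝ) : WithTop ℝ) := by
          rw [zero_sub, NA_v_neg v hv_mul hv_top, hvy]
        rw [this, WithTop.coe_le_coe] at hyy'
        rw [hrtN] at hyy'
        linarith
      · have hy'Q : y' ^ Q = a := by
          have h : y' ^ Q * y' = a * y' := by
            rw [← pow_succ, hQq]; exact hy'q
          exact mul_right_cancel₀ hy'ne h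
        set ζ : C := y' * y⁻¹ with hζ
        have hζQ : ζ ^ Q = 1 := by
          rw [hζ, mul_pow, inv_pow, hy'Q, hyQ, mul_inv_cancel₀ ha_ne]
        have hζ1 : ζ ≠ 1 := by
          intro h
          apply hne
          rw [hζ, mul_inv_eq_one₀ hy_ne] at h
          exact h
        have hζv : v (ζ - 1) = 0 :=
          NA_root_unity v hv_mul hv_add hv_top Q hQ1 hQ0 hQv ζ hζQ hζ1
        have hfac2 : y' - y = y * (ζ - 1) := by
          rw [hζ]
          field_simp
        have : v (y' - y) = ((r : ℝ) : WithTop ℝ) := by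
          rw [hfac2, hv_mul, hvy, hζv, add_zero]
        rw [this, WithTop.coe_le_coe] at hyy'
        rw [hrtN] at hyy'
        linarith
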